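/- Let (X,d) be a compact metric space, let {S_1,...,S_N} be an IFS of contracting similarities on X with similarity dimension s, let C ⊆ X be a nonempty compact set, and let F_C be the inhomogeneous attractor with condensation C. If the box dimension of C exists (i.e., lower and upper box dimensions of C coincide) and dim_B C ≥ s, then the box dimension of F_C exists and equals dim_B C. -/

import Mathlib

open Set Filter Topology Metric MeasureTheory

/-- Minimum number of sets of diameter at most `δ` needed to cover `F`. -/
noncomputable def coverN {X : Type*} [MetricSpace X] (F : Set X) (δ : ℝ) : ℕ :=
  sInf {n : ℕ | ∃ U : Fin n → Set X, (∀ i, EMetric.diam (U i) ≤ ENNReal.ofReal δ) ∧ F ⊆ ⋃ i, U i}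

/-- Lower box dimension. -/
noncomputable def lbDim {X : Type*} [MetricSpace X] (F : Set X) : ℝ :=
  Filter.liminf (fun δ : ℝ => Real.log (coverN F δ) / (-Real.log δ)) (𝓝[>] 0)

/-- Upper box dimension. -/
noncomputable def ubDim {X : Type*} [MetricSpace X] (F : Set X) : ℝ :=
  Filter.limsup (fun δ : ℝ => Real.log (coverN F δ) / (-Real.log δ)) (𝓝[>] 0)

namespace coverAux
open scoped Classical




variable {X : Type*} [MetricSpace X]

def coverSet (F : Set X) (δ : ℝ) : Set ℕ :=
  {n : ℕ | ∃ U : Fin n → Set X, (∀ i, EMetric.diam (U i) ≤ ENNReal.ofReal δ) ∧ F ⊆ ⋃ i, U i}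

lemma coverN_def (F : Set X) (δ : ℝ) : coverN F δ = sInf (coverSet F δ) := rfl

lemma coverSet_nonempty [CompactSpace X] (F : Set X) {δ : ℝ} (hδ : 0 < δ) :
    (coverSet F δ).Nonempty := by
  have htb : TotallyBounded (Set.univ : Set X) := isCompact_univ.totallyBounded
  rw [EMetric.totallyBounded_iff] at htb
  obtain ⟨t, htf, hcov⟩ := htb (ENNReal.ofReal δ / 2)
    (ENNReal.div_pos (ENNReal.ofReal_pos.2 hδ).ne' (by norm_num))
  lift t to Finset X using htf
  refine ⟨t.card, fun i => EMetric.ball (t.equivFin.symm i : X) (ENNReal.ofReal δ / 2), fun i => ?_, ?_⟩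
  · calc EMetric.diam _ ≤ 2 * (ENNReal.ofReal δ / 2) := EMetric.diam_ball
    _ ≤ ENNReal.ofReal δ := by
        rw [ENNReal.mul_div_cancel' (by norm_num) (by norm_num)]
  · intro x _
    have := hcov (Set.mem_univ x)
    simp only [Set.mem_iUnion, Finset.mem_coe] at this ⊢
    obtain ⟨y, hy, hxy⟩ := this
    exact ⟨t.equivFin ⟨y, hy⟩, by simpa using (show x ∈ EMetric.ball y (ENNReal.ofReal δ / 2) from hxy)⟩

lemma coverN_mem [CompactSpace X] (F : Set X) {δ : ℝ} (hδ : 0 < δ) :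
    coverN F δ ∈ coverSet F δ := Nat.sInf_mem (coverSet_nonempty F hδ)

lemma coverN_le {F : Set X} {δ : ℝ} {n : ℕ} (h : n ∈ coverSet F δ) : coverN F δ ≤ n :=
  Nat.sInf_le h

lemma coverN_mono [CompactSpace X] {F G : Set X} (h : F ⊆ G) {δ : ℝ} (hδ : 0 < δ) :
    coverN F δ ≤ coverN G δ := by
  obtain ⟨U, hU, hcov⟩ := coverN_mem G hδ
  exact coverN_le ⟨U, hU, h.trans hcov⟩

lemma coverN_anti [CompactSpace X] (F : Set X) {δ δ' : ℝ} (hδ : 0 < δ) (h : δ ≤ δ') :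
    coverN F δ' ≤ coverN F δ := by
  obtain ⟨U, hU, hcov⟩ := coverN_mem F hδ
  exact coverN_le ⟨U, fun i => (hU i).trans (ENNReal.ofReal_le_ofReal h), hcov⟩

lemma coverN_pos [CompactSpace X] {F : Set X} (hF : F.Nonempty) {δ : ℝ} (hδ : 0 < δ) :
    1 ≤ coverN F δ := by
  rcases Nat.eq_zero_or_pos (coverN F δ) with h | h
  · exfalso
    obtain ⟨U, _, hcov⟩ := coverN_mem F hδ
    obtain ⟨x, hx⟩ := hF
    obtain ⟨i, -⟩ := Set.mem_iUnion.1 (hcov hx)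
    exact (h ▸ i).elim0
  · exact h

lemma coverN_union [CompactSpace X] (A B : Set X) {δ : ℝ} (hδ : 0 < δ) :
    coverN (A ∪ B) δ ≤ coverN A δ + coverN B δ := by
  obtain ⟨U, hU, hcovU⟩ := coverN_mem A hδ
  obtain ⟨V, hV, hcovV⟩ := coverN_mem B hδ
  refine coverN_le ⟨Fin.addCases U V, ?_, ?_⟩
  · intro i
    refine Fin.addCases (fun j => ?_) (fun j => ?_) i
    · simpa only [Fin.addCases_left] using hU j
    · simpa only [Fin.addCases_right] using hV j
  · rintro x (hx | hx)
    · obtain ⟨i, hi⟩ := Set.mem_iUnion.1 (hcovU hx)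
      exact Set.mem_iUnion.2 ⟨Fin.castAdd _ i, by simpa only [Fin.addCases_left] using hi⟩
    · obtain ⟨i, hi⟩ := Set.mem_iUnion.1 (hcovV hx)
      exact Set.mem_iUnion.2 ⟨Fin.natAdd _ i, by simpa only [Fin.addCases_right] using hi⟩

lemma coverN_biUnion [CompactSpace X] {ι : Type*} (A : Finset ι) (T : ι → Set X)
    {δ : ℝ} (hδ : 0 < δ) :
    coverN (⋃ w ∈ A, T w) δ ≤ ∑ w ∈ A, coverN (T w) δ := by
  classical
  induction A using Finset.induction_on with
  | empty => simp [coverN_le (F := (∅ : Set X)) ⟨Fin.elim0, by simp, by simp⟩]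
  | insert a s hnot ih =>
    rw [Finset.set_biUnion_insert, Finset.sum_insert hnot]
    exact (coverN_union _ _ hδ).trans (by gcongr)

lemma coverN_image_le [CompactSpace X] (F : Set X) (g : X → X) {ρ : ℝ} (hρ : 0 < ρ)
    (hg : ∀ x y, dist (g x) (g y) ≤ ρ * dist x y) {δ ε : ℝ} (hε : 0 < ε)
    (h : ρ * ε ≤ δ) : coverN (g '' F) δ ≤ coverN F ε := by
  have hlip : LipschitzWith ρ.toNNReal g :=
    LipschitzWith.of_dist_le_mul (by intro x y; rw [Real.coe_toNNReal _ hρ.le]; exact hg x y)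
  obtain ⟨U, hU, hcov⟩ := coverN_mem F hε
  refine coverN_le ⟨fun i => g '' U i, fun i => ?_, ?_⟩
  · calc EMetric.diam (g '' U i) ≤ ρ.toNNReal * EMetric.diam (U i) :=
          hlip.ediam_image_le (U i)
    _ ≤ (ρ.toNNReal : ENNReal) * ENNReal.ofReal ε := mul_le_mul_right (hU i) _
    _ = ENNReal.ofReal ρ * ENNReal.ofReal ε := rfl
    _ = ENNReal.ofReal (ρ * ε) := (ENNReal.ofReal_mul hρ.le).symm
    _ ≤ ENNReal.ofReal δ := ENNReal.ofReal_le_ofReal h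
  · rintro x ⟨y, hy, rfl⟩
    obtain ⟨i, hi⟩ := Set.mem_iUnion.1 (hcov hy)
    exact Set.mem_iUnion.2 ⟨i, ⟨y, hi, rfl⟩⟩




variable {N : ℕ}

/-- product of ratios along a word -/
def rwd (r : Fin N → ℝ) (w : List (Fin N)) : ℝ := (w.map r).prod

/-- composition of maps along a word -/
def Swd {X : Type*} (S : Fin N → X → X) (w : List (Fin N)) : X → X :=
  w.foldr (fun i g => S i ∘ g) id

@[simp] lemma rwd_nil (r : Fin N → ℝ) : rwd r [] = 1 := rfl

@[simp] lemma rwd_cons (r : Fin N → ℝ) (i : Fin N) (w : List (Fin N)) :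
    rwd r (i :: w) = r i * rwd r w := by simp [rwd]

lemma rwd_append (r : Fin N → ℝ) (w v : List (Fin N)) :
    rwd r (w ++ v) = rwd r w * rwd r v := by simp [rwd]

@[simp] lemma Swd_nil {X : Type*} (S : Fin N → X → X) : Swd S [] = id := rfl

@[simp] lemma Swd_cons {X : Type*} (S : Fin N → X → X) (i : Fin N) (w : List (Fin N)) :
    Swd S (i :: w) = S i ∘ Swd S w := rfl

lemma Swd_append_singleton {X : Type*} (S : Fin N → X → X) (w : List (Fin N)) (i : Fin N) :
    Swd S (w ++ [i]) = Swd S w ∘ S i := by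
  induction w with
  | nil => rfl
  | cons a w ih => simp [Swd_cons, ih]; rfl

lemma rwd_pos {r : Fin N → ℝ} (hr : ∀ i, r i ∈ Set.Ioo (0:ℝ) 1) (w : List (Fin N)) :
    0 < rwd r w := by
  induction w with
  | nil => simp
  | cons a w ih => simpa using mul_pos (hr a).1 ih

lemma rwd_le_one {r : Fin N → ℝ} (hr : ∀ i, r i ∈ Set.Ioo (0:ℝ) 1) (w : List (Fin N)) :
    rwd r w ≤ 1 := by
  induction w with
  | nil => simp
  | cons a w ih =>
    simp only [rwd_cons]
    calc r a * rwd r w ≤ 1 * 1 := by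
          apply mul_le_mul (hr a).2.le ih (rwd_pos hr w).le zero_le_one
    _ = 1 := by ring

lemma rwd_le_pow {r : Fin N → ℝ} (hr : ∀ i, r i ∈ Set.Ioo (0:ℝ) 1) {R : ℝ}
    (hR : ∀ i, r i ≤ R) (hR0 : 0 ≤ R) (w : List (Fin N)) :
    rwd r w ≤ R ^ w.length := by
  induction w with
  | nil => simp
  | cons a w ih =>
    simp only [rwd_cons, List.length_cons, pow_succ]
    rw [mul_comm (R ^ w.length) R]
    exact mul_le_mul (hR a) ih (rwd_pos hr w).le (by positivity)

lemma dist_Swd {X : Type*} [MetricSpace X] (S : Fin N → X → X) {r : Fin N → ℝ}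
    (hS : ∀ i x y, dist (S i x) (S i y) = r i * dist x y) (w : List (Fin N)) :
    ∀ x y, dist (Swd S w x) (Swd S w y) = rwd r w * dist x y := by
  induction w with
  | nil => simp
  | cons a w ih =>
    intro x y
    simp only [Swd_cons, Function.comp_apply, rwd_cons, hS a, ih x y, mul_assoc]

/-- words of length k -/
def words (N k : ℕ) : Finset (List (Fin N)) :=
  Finset.image (fun f : Fin k → Fin N => List.ofFn f) Finset.univ

lemma mem_words {k : ℕ} {w : List (Fin N)} : w ∈ words N k ↔ w.length = k := by
  constructor
  · rintro hw
    obtain ⟨f, -, rfl⟩ := Finset.mem_image.1 hw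
    simp
  · rintro rfl
    refine Finset.mem_image.2 ⟨fun i => w.get i, Finset.mem_univ _, ?_⟩
    simp [List.ofFn_get]

lemma kraft (r : Fin N → ℝ) (hr : ∀ i, r i ∈ Set.Ioo (0:ℝ) 1) (t : ℝ) (k : ℕ) :
    ∑ w ∈ words N k, rwd r w ^ t = (∑ i, r i ^ t) ^ k := by
  classical
  rw [words, Finset.sum_image (fun f _ g _ h => List.ofFn_injective h)]
  have : ∀ f : Fin k → Fin N, rwd r (List.ofFn f) ^ t = ∏ j, r (f j) ^ t := by
    intro f
    rw [rwd, List.map_ofFn, List.prod_ofFn]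
    exact (Real.finset_prod_rpow Finset.univ _ (fun i _ => (hr (f i)).1.le) t).symm
  simp only [this]
  have h2 : (∑ i, r i ^ t) ^ k = ∏ _j : Fin k, (∑ i, r i ^ t) := by
    simp [Finset.prod_const]
  rw [h2, Finset.prod_univ_sum]
  simp [Fintype.piFinset_univ]

lemma card_filter_le {k : ℕ} (r : Fin N → ℝ) (hr : ∀ i, r i ∈ Set.Ioo (0:ℝ) 1)
    {t a : ℝ} (ht : 0 ≤ t) (ha : 0 < a) (hsum : (∑ i, r i ^ t) ≤ 1)
    (P : List (Fin N) → Prop) [DecidablePred P] (hP : ∀ w, P w → a ≤ rwd r w) :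
    ((words N k).filter P).card * a ^ t ≤ 1 := by
  have h1 : ((words N k).filter P).card * a ^ t = ∑ w ∈ (words N k).filter P, a ^ t := by
    rw [Finset.sum_const, nsmul_eq_mul]
  rw [h1]
  calc ∑ w ∈ (words N k).filter P, a ^ t
      ≤ ∑ w ∈ (words N k).filter P, rwd r w ^ t := by
        refine Finset.sum_le_sum fun w hw => ?_
        exact Real.rpow_le_rpow ha.le (hP w (Finset.mem_filter.1 hw).2) ht
    _ ≤ ∑ w ∈ words N k, rwd r w ^ t := by
        refine Finset.sum_le_sum_of_subset_of_nonneg (Finset.filter_subset _ _) ?_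
        intro w _ _
        exact Real.rpow_nonneg (rwd_pos hr w).le t
    _ = (∑ i, r i ^ t) ^ k := kraft r hr t k
    _ ≤ 1 := pow_le_one₀ (Finset.sum_nonneg fun i _ => Real.rpow_nonneg (hr i).1.le t) hsum



section decomp
variable {X : Type*} [MetricSpace X] [CompactSpace X] {N : ℕ}

lemma decomp (S : Fin N → X → X) (r : Fin N → ℝ) (hr : ∀ i, r i ∈ Set.Ioo (0:ℝ) 1)
    (C FC : Set X) (hFC : FC = (⋃ i, S i '' FC) ∪ C)
    {δ ρ : ℝ} (hδ0 : 0 < δ) (hδ1 : δ ≤ 1) (hρ0 : 0 ≤ ρ) (hρ : ∀ i, ρ ≤ r i) :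
    ∀ k : ℕ, FC ⊆
      (⋃ w ∈ (Finset.range (k+1)).biUnion
          (fun j => (words N j).filter (fun w => rwd r w < δ ∧ ρ * δ ≤ rwd r w)),
          Swd S w '' FC)
      ∪ (⋃ w ∈ (words N k).filter (fun w => δ ≤ rwd r w), Swd S w '' FC)
      ∪ (⋃ w ∈ (Finset.range k).biUnion
          (fun j => (words N j).filter (fun w => δ ≤ rwd r w)), Swd S w '' C) := by
  intro k
  induction k with
  | zero =>
    intro x hx
    refine Or.inl (Or.inr ?_)
    refine Set.mem_biUnion (x := ([] : List (Fin N)))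
      (Finset.mem_coe.2 (Finset.mem_filter.2 ⟨mem_words.2 rfl, by simpa using hδ1⟩))
      (by simpa using hx)
  | succ k ih =>
    intro x hx
    rcases ih hx with ((h | h) | h)
    · -- dead part: stays
      obtain ⟨w, hw, hxw⟩ := Set.mem_iUnion₂.mp h
      refine Or.inl (Or.inl (Set.mem_biUnion ?_ hxw))
      exact Finset.mem_coe.2 (Finset.biUnion_subset_biUnion_of_subset_left _
        (Finset.range_subset_range.2 (by omega)) (Finset.mem_coe.1 hw))
    · -- live part: expand
      obtain ⟨w, hw, hxw⟩ := Set.mem_iUnion₂.mp h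
      have hwf := Finset.mem_filter.1 (Finset.mem_coe.1 hw)
      obtain ⟨y, hy, rfl⟩ := hxw
      rw [hFC] at hy
      rcases hy with hy | hy
      · -- y in union of images
        obtain ⟨i, z, hz, rfl⟩ := by simpa using hy
        have hxw' : Swd S w (S i z) ∈ Swd S (w ++ [i]) '' FC := by
          rw [Swd_append_singleton]
          exact ⟨z, hz, rfl⟩
        have hlen : w ++ [i] ∈ words N (k+1) := by
          rw [mem_words]
          simp [mem_words.1 hwf.1]
        have hrwd : rwd r (w ++ [i]) = rwd r w * r i := by
          rw [rwd_append]; simp [rwd]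
        by_cases hlive : δ ≤ rwd r (w ++ [i])
        · exact Or.inl (Or.inr (Set.mem_biUnion
            (Finset.mem_coe.2 (Finset.mem_filter.2 ⟨hlen, hlive⟩)) hxw'))
        · push_neg at hlive
          have hdead : ρ * δ ≤ rwd r (w ++ [i]) := by
            rw [hrwd, mul_comm ρ δ]
            exact mul_le_mul hwf.2 (hρ i) hρ0 (rwd_pos hr w).le
          refine Or.inl (Or.inl (Set.mem_biUnion ?_ hxw'))
          refine Finset.mem_coe.2 (Finset.mem_biUnion.2 ⟨k+1, ?_, ?_⟩)
          · exact Finset.mem_range.2 (by omega)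
          · exact Finset.mem_filter.2 ⟨hlen, hlive, hdead⟩
      · -- y in C
        refine Or.inr (Set.mem_biUnion ?_ ⟨y, hy, rfl⟩)
        refine Finset.mem_coe.2 (Finset.mem_biUnion.2 ⟨k, Finset.mem_range.2 (by omega), ?_⟩)
        exact Finset.mem_filter.2 hwf
    · -- pre part: stays
      obtain ⟨w, hw, hxw⟩ := Set.mem_iUnion₂.mp h
      refine Or.inr (Set.mem_biUnion ?_ hxw)
      exact Finset.mem_coe.2 (Finset.biUnion_subset_biUnion_of_subset_left _
        (Finset.range_subset_range.2 (by omega)) (Finset.mem_coe.1 hw))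

end decomp

section main0
variable {X : Type*} [MetricSpace X] [CompactSpace X] {N : ℕ}

lemma main0 (S : Fin N → X → X) (r : Fin N → ℝ) (hr : ∀ i, r i ∈ Set.Ioo (0:ℝ) 1)
    (hS : ∀ i x y, dist (S i x) (S i y) = r i * dist x y)
    {s : ℝ} (hs : ∑ i, r i ^ s = 1) (hs0 : 0 ≤ s)
    (C FC : Set X) (hFC : FC = (⋃ i, S i '' FC) ∪ C)
    {R ρ : ℝ} (hρ0 : 0 < ρ) (hR0 : 0 < R) (hR1 : R < 1)
    (hbd : ∀ i, ρ ≤ r i ∧ r i ≤ R)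
    {δ c t : ℝ} (hδ0 : 0 < δ) (hδ1 : δ < 1) (hc : 0 ≤ c) (hst : s ≤ t)
    (hcov : ∀ ε : ℝ, δ ≤ ε → ε ≤ 1 → (coverN C ε : ℝ) ≤ c * ε ^ (-t)) :
    ∃ K : ℕ, (K : ℝ) ≤ Real.log δ / Real.log R + 2 ∧
      (coverN FC δ : ℝ) ≤
        (coverN FC 1 : ℝ) * ((K : ℝ) + 1) * (ρ * δ) ^ (-s) + c * K * δ ^ (-t) := by
  classical
  have hlogδ : Real.log δ < 0 := Real.log_neg hδ0 hδ1
  have hlogR : Real.log R < 0 := Real.log_neg hR0 hR1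
  set L := Real.log δ / Real.log R with hL
  have hL0 : 0 ≤ L := by
    rw [hL, div_nonneg_iff]
    exact Or.inr ⟨hlogδ.le, hlogR.le⟩
  refine ⟨⌊L⌋₊ + 1, ?_, ?_⟩
  · push_cast
    have := Nat.floor_le hL0
    linarith
  set K := ⌊L⌋₊ + 1 with hKdef
  have hKL : L < (K : ℝ) := by
    rw [hKdef]
    push_cast
    exact Nat.lt_floor_add_one L
  have hRK : R ^ K < δ := by
    rw [← Real.log_lt_log_iff (pow_pos hR0 K) hδ0, Real.log_pow]
    calc (K : ℝ) * Real.log R < L * Real.log R := mul_lt_mul_of_neg_right hKL hlogR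
    _ = Real.log δ := div_mul_cancel₀ _ hlogR.ne
  -- decomposition
  have hdec := decomp S r hr C FC hFC hδ0 hδ1.le hρ0.le (fun i => (hbd i).1) K
  have hliveK : (words N K).filter (fun w => δ ≤ rwd r w) = ∅ := by
    rw [Finset.filter_eq_empty_iff]
    intro w hw
    have h1 : rwd r w ≤ R ^ K :=
      (mem_words.1 hw) ▸ rwd_le_pow hr (fun i => (hbd i).2) hR0.le w
    exact not_le.2 (lt_of_le_of_lt h1 hRK)
  rw [hliveK] at hdec
  set DW := (Finset.range (K+1)).biUnion
      (fun j => (words N j).filter (fun w => rwd r w < δ ∧ ρ * δ ≤ rwd r w)) with hDW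
  set PW := (Finset.range K).biUnion
      (fun j => (words N j).filter (fun w => δ ≤ rwd r w)) with hPW
  set M := coverN FC 1 with hM
  have hdec' : FC ⊆ (⋃ w ∈ DW, Swd S w '' FC) ∪ (⋃ w ∈ PW, Swd S w '' C) := by
    intro x hx
    rcases hdec hx with (h | h) | h
    · exact Or.inl h
    · obtain ⟨w, hw, -⟩ := Set.mem_iUnion₂.mp h
      simp at hw
    · exact Or.inr h
  have h1 : coverN FC δ ≤ coverN (⋃ w ∈ DW, Swd S w '' FC) δ
      + coverN (⋃ w ∈ PW, Swd S w '' C) δ :=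
    (coverN_mono hdec' hδ0).trans (coverN_union _ _ hδ0)
  -- bound on the dead part
  have hdw : ∀ w ∈ DW, coverN (Swd S w '' FC) δ ≤ M := by
    intro w hw
    obtain ⟨j, hj, hwf⟩ := Finset.mem_biUnion.1 hw
    have hwf' := (Finset.mem_filter.1 hwf).2
    refine coverN_image_le FC (Swd S w) (rwd_pos hr w)
      (fun x y => (dist_Swd S hS w x y).le) one_pos (by linarith [hwf'.1])
  have hDcard : ((DW.card : ℝ)) ≤ ((K : ℝ) + 1) * (ρ * δ) ^ (-s) := by
    have hcb : (DW.card : ℝ) ≤ ∑ j ∈ Finset.range (K+1),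
        (((words N j).filter (fun w => rwd r w < δ ∧ ρ * δ ≤ rwd r w)).card : ℝ) := by
      exact_mod_cast Nat.cast_le.2 Finset.card_biUnion_le
    have hone : ∀ j, (((words N j).filter
        (fun w => rwd r w < δ ∧ ρ * δ ≤ rwd r w)).card : ℝ) ≤ (ρ * δ) ^ (-s) := by
      intro j
      have hpos : (0:ℝ) < ρ * δ := mul_pos hρ0 hδ0
      have := card_filter_le (k := j) r hr hs0 hpos (le_of_eq hs)
        (fun w => rwd r w < δ ∧ ρ * δ ≤ rwd r w) (fun w h => h.2)
      rw [Real.rpow_neg hpos.le, ← one_div]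
      rw [le_div_iff₀ (Real.rpow_pos_of_pos hpos s)]
      exact this
    calc (DW.card : ℝ) ≤ ∑ j ∈ Finset.range (K+1), (ρ * δ) ^ (-s) :=
          hcb.trans (Finset.sum_le_sum fun j _ => hone j)
    _ = ((K : ℝ) + 1) * (ρ * δ) ^ (-s) := by
        rw [Finset.sum_const, Finset.card_range, nsmul_eq_mul]
        push_cast; ring
  have hD : (coverN (⋃ w ∈ DW, Swd S w '' FC) δ : ℝ)
      ≤ (M : ℝ) * ((K : ℝ) + 1) * (ρ * δ) ^ (-s) := by
    have hn : coverN (⋃ w ∈ DW, Swd S w '' FC) δ ≤ DW.card * M :=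
      (coverN_biUnion DW _ hδ0).trans (Finset.sum_le_card_nsmul _ _ M hdw)
    calc (coverN (⋃ w ∈ DW, Swd S w '' FC) δ : ℝ) ≤ (DW.card : ℝ) * (M : ℝ) := by
          exact_mod_cast Nat.cast_le.2 hn
    _ ≤ (((K : ℝ) + 1) * (ρ * δ) ^ (-s)) * (M : ℝ) := by
        apply mul_le_mul_of_nonneg_right hDcard (Nat.cast_nonneg M)
    _ = (M : ℝ) * ((K : ℝ) + 1) * (ρ * δ) ^ (-s) := by ring
  -- bound on the pre part
  have hsumt : (∑ i, r i ^ t) ≤ 1 := by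
    calc (∑ i, r i ^ t) ≤ ∑ i, r i ^ s :=
          Finset.sum_le_sum fun i _ =>
            Real.rpow_le_rpow_of_exponent_ge (hr i).1 (hr i).2.le hst
    _ = 1 := hs
  have hpw : ∀ j, ∀ w ∈ (words N j).filter (fun w => δ ≤ rwd r w),
      (coverN (Swd S w '' C) δ : ℝ) ≤ c * δ ^ (-t) * rwd r w ^ t := by
    intro j w hw
    have hwf := (Finset.mem_filter.1 hw).2
    have hq : 0 < rwd r w := rwd_pos hr w
    have hq1 : rwd r w ≤ 1 := rwd_le_one hr w
    have hcn : coverN (Swd S w '' C) δ ≤ coverN C (δ / rwd r w) := by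
      refine coverN_image_le C (Swd S w) hq
        (fun x y => (dist_Swd S hS w x y).le) (div_pos hδ0 hq) ?_
      rw [mul_div_cancel₀ _ hq.ne']
    have hε1 : δ ≤ δ / rwd r w := by
      rw [le_div_iff₀ hq]
      calc δ * rwd r w ≤ δ * 1 := by nlinarith
      _ = δ := mul_one δ
    have hε2 : δ / rwd r w ≤ 1 := (div_le_one hq).2 hwf
    have hcc := hcov _ hε1 hε2
    have heq : (δ / rwd r w) ^ (-t) = δ ^ (-t) * rwd r w ^ t := by
      rw [Real.rpow_neg (div_nonneg hδ0.le hq.le), Real.div_rpow hδ0.le hq.le,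
        inv_div, div_eq_mul_inv, ← Real.rpow_neg hδ0.le, mul_comm]
    calc (coverN (Swd S w '' C) δ : ℝ) ≤ (coverN C (δ / rwd r w) : ℝ) := by
          exact_mod_cast Nat.cast_le.2 hcn
    _ ≤ c * (δ / rwd r w) ^ (-t) := hcc
    _ = c * δ ^ (-t) * rwd r w ^ t := by rw [heq, mul_assoc]
  have hP : (coverN (⋃ w ∈ PW, Swd S w '' C) δ : ℝ) ≤ c * K * δ ^ (-t) := by
    have hsplit : (⋃ w ∈ PW, Swd S w '' C)
        = ⋃ j ∈ Finset.range K, ⋃ w ∈ (words N j).filter (fun w => δ ≤ rwd r w),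
            Swd S w '' C := by
      rw [hPW]
      exact Finset.set_biUnion_biUnion _ _ _
    have hn1 : coverN (⋃ w ∈ PW, Swd S w '' C) δ ≤ ∑ j ∈ Finset.range K,
        coverN (⋃ w ∈ (words N j).filter (fun w => δ ≤ rwd r w), Swd S w '' C) δ := by
      rw [hsplit]
      exact coverN_biUnion _ _ hδ0
    have hn2 : ∀ j, (coverN (⋃ w ∈ (words N j).filter (fun w => δ ≤ rwd r w),
        Swd S w '' C) δ : ℝ) ≤ c * δ ^ (-t) := by
      intro j
      have hb := coverN_biUnion ((words N j).filter (fun w => δ ≤ rwd r w))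
        (fun w => Swd S w '' C) hδ0
      calc (coverN (⋃ w ∈ (words N j).filter (fun w => δ ≤ rwd r w),
            Swd S w '' C) δ : ℝ)
          ≤ ∑ w ∈ (words N j).filter (fun w => δ ≤ rwd r w),
              (coverN (Swd S w '' C) δ : ℝ) := by exact_mod_cast Nat.cast_le.2 hb
      _ ≤ ∑ w ∈ (words N j).filter (fun w => δ ≤ rwd r w),
              c * δ ^ (-t) * rwd r w ^ t := Finset.sum_le_sum (hpw j)
      _ = c * δ ^ (-t) * ∑ w ∈ (words N j).filter (fun w => δ ≤ rwd r w),
              rwd r w ^ t := by rw [Finset.mul_sum]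
      _ ≤ c * δ ^ (-t) * 1 := by
          apply mul_le_mul_of_nonneg_left _ (by positivity)
          calc (∑ w ∈ (words N j).filter (fun w => δ ≤ rwd r w), rwd r w ^ t)
              ≤ ∑ w ∈ words N j, rwd r w ^ t := by
                refine Finset.sum_le_sum_of_subset_of_nonneg
                  (Finset.filter_subset _ _) fun w _ _ =>
                    Real.rpow_nonneg (rwd_pos hr w).le t
          _ = (∑ i, r i ^ t) ^ j := kraft r hr t j
          _ ≤ 1 := pow_le_one₀
              (Finset.sum_nonneg fun i _ => Real.rpow_nonneg (hr i).1.le t) hsumt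
      _ = c * δ ^ (-t) := mul_one _
    calc (coverN (⋃ w ∈ PW, Swd S w '' C) δ : ℝ)
        ≤ ∑ j ∈ Finset.range K, (coverN (⋃ w ∈ (words N j).filter
            (fun w => δ ≤ rwd r w), Swd S w '' C) δ : ℝ) := by
          exact_mod_cast Nat.cast_le.2 hn1
    _ ≤ ∑ j ∈ Finset.range K, c * δ ^ (-t) :=
        Finset.sum_le_sum fun j _ => hn2 j
    _ = c * K * δ ^ (-t) := by
        rw [Finset.sum_const, Finset.card_range, nsmul_eq_mul]; ring
  calc (coverN FC δ : ℝ) ≤ (coverN (⋃ w ∈ DW, Swd S w '' FC) δ : ℝ)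
        + (coverN (⋃ w ∈ PW, Swd S w '' C) δ : ℝ) := by exact_mod_cast Nat.cast_le.2 h1
  _ ≤ (M : ℝ) * ((K : ℝ) + 1) * (ρ * δ) ^ (-s) + c * K * δ ^ (-t) := add_le_add hD hP

end main0

section analytic

lemma s_nonneg {N : ℕ} (hN : 0 < N) {r : Fin N → ℝ} (hr : ∀ i, r i ∈ Set.Ioo (0:ℝ) 1)
    {s : ℝ} (hs : ∑ i, r i ^ s = 1) : 0 ≤ s := by
  by_contra h
  push_neg at h
  have i0 : Fin N := ⟨0, hN⟩
  have h1 : (1:ℝ) < r i0 ^ s :=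
    (Real.one_lt_rpow_iff_of_pos (hr i0).1).2 (Or.inr ⟨(hr i0).2, h⟩)
  have h2 : r i0 ^ s ≤ ∑ i, r i ^ s :=
    Finset.single_le_sum (fun i _ => Real.rpow_nonneg (hr i).1.le s) (Finset.mem_univ i0)
  rw [hs] at h2
  linarith

lemma ev_atTop {c a η : ℝ} (hc : 1 ≤ c) (ha : 0 < a) (hη : 0 < η) :
    ∀ᶠ y in Filter.atTop, Real.log (c * (a * y + 3)) ≤ η * y := by
  have h1 := Real.isLittleO_log_id_atTop.def (show (0:ℝ) < η/2 by linarith)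
  have h2 : Filter.Tendsto (fun y : ℝ => (η/2) * y) Filter.atTop Filter.atTop :=
    Filter.Tendsto.const_mul_atTop (by linarith) Filter.tendsto_id
  filter_upwards [h1, Filter.eventually_ge_atTop (1:ℝ),
    h2.eventually_ge_atTop (Real.log c + Real.log (a+3))] with y hy hy1 hy2
  have hay : (0:ℝ) < a * y + 3 := by nlinarith
  have hc0 : (0:ℝ) < c := by linarith
  have step1 : Real.log (c * (a * y + 3)) = Real.log c + Real.log (a * y + 3) :=
    Real.log_mul hc0.ne' hay.ne'
  have step2 : Real.log (a * y + 3) ≤ Real.log ((a + 3) * y) := by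
    apply Real.log_le_log hay
    nlinarith
  have step3 : Real.log ((a + 3) * y) = Real.log (a+3) + Real.log y := by
    apply Real.log_mul (by positivity) (by linarith)
  have step4 : Real.log y ≤ (η/2) * y := by
    have := hy
    rw [Real.norm_eq_abs, Real.norm_eq_abs, id] at this
    calc Real.log y ≤ |Real.log y| := le_abs_self _
    _ ≤ η/2 * |y| := this
    _ = η/2 * y := by rw [abs_of_pos (by linarith)]
  calc Real.log (c * (a * y + 3))
      = Real.log c + Real.log (a * y + 3) := step1
  _ ≤ Real.log c + (Real.log (a+3) + Real.log y) := by
      have := step2.trans_eq step3; linarith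
  _ ≤ (η/2) * y + (η/2) * y := by linarith
  _ = η * y := by ring

lemma ev_main {R c9 η : ℝ} (hR0 : 0 < R) (hR1 : R < 1) (hc9 : 1 ≤ c9) (hη : 0 < η) :
    ∀ᶠ δ in nhdsWithin (0:ℝ) (Set.Ioi 0),
      Real.log (c9 * (Real.log δ / Real.log R + 3)) ≤ η * (-Real.log δ) := by
  have hlogR : Real.log R < 0 := Real.log_neg hR0 hR1
  have ha : (0:ℝ) < 1 / (-Real.log R) := by
    apply div_pos one_pos (by linarith)
  have htend : Filter.Tendsto (fun δ : ℝ => -Real.log δ)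
      (nhdsWithin (0:ℝ) (Set.Ioi 0)) Filter.atTop :=
    Filter.tendsto_neg_atBot_atTop.comp Real.tendsto_log_nhdsGT_zero
  have hev := htend.eventually (ev_atTop hc9 ha hη)
  filter_upwards [hev] with δ hδ
  have heq : (1 / (-Real.log R)) * (-Real.log δ) = Real.log δ / Real.log R := by
    field_simp
  rw [← heq]
  exact hδ

end analytic

end coverAux

set_option maxHeartbeats 1000000 in
theorem box_dim_inhomogeneous_of_boxDim_condensation_ge
    {X : Type*} [MetricSpace X] [CompactSpace X] {N : ℕ} (hN : 0 < N)
    (S : Fin N → X → X) (r : Fin N → ℝ)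
    (hr : ∀ i, r i ∈ Set.Ioo (0 : ℝ) 1)
    (hS : ∀ i x y, dist (S i x) (S i y) = r i * dist x y)
    (s : ℝ) (hs : ∑ i, r i ^ s = 1)
    (C : Set X) (hC : IsCompact C) (hCne : C.Nonempty)
    (FC : Set X) (hFCc : IsCompact FC) (hFCne : FC.Nonempty)
    (hFC : FC = (⋃ i, S i '' FC) ∪ C)
    (hdimC : lbDim C = ubDim C) (hsC : s ≤ ubDim C) :
    lbDim FC = ubDim FC ∧ ubDim FC = ubDim C := by
  classical
  set fC : ℝ → ℝ := fun δ => Real.log (coverN C δ) / (-Real.log δ) with hfC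
  set fF : ℝ → ℝ := fun δ => Real.log (coverN FC δ) / (-Real.log δ) with hfF
  have hlbCdef : lbDim C = Filter.liminf fC (𝓝[>] (0:ℝ)) := rfl
  have hubCdef : ubDim C = Filter.limsup fC (𝓝[>] (0:ℝ)) := rfl
  have hlbFdef : lbDim FC = Filter.liminf fF (𝓝[>] (0:ℝ)) := rfl
  have hubFdef : ubDim FC = Filter.limsup fF (𝓝[>] (0:ℝ)) := rfl
  have hs0 : 0 ≤ s := coverAux.s_nonneg hN hr hs
  have hCFC : C ⊆ FC := by rw [hFC]; exact Set.subset_union_right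
  have hne : Nonempty (Fin N) := ⟨⟨0, hN⟩⟩
  set R := Finset.univ.sup' Finset.univ_nonempty r with hRdef
  set ρ := Finset.univ.inf' Finset.univ_nonempty r with hρdef
  have hbd : ∀ i, ρ ≤ r i ∧ r i ≤ R := fun i =>
    ⟨Finset.inf'_le r (Finset.mem_univ i), Finset.le_sup' r (Finset.mem_univ i)⟩
  have hρ0 : 0 < ρ := by
    obtain ⟨i0, -, hi0⟩ := Finset.exists_mem_eq_inf' Finset.univ_nonempty r
    rw [hρdef, hi0]; exact (hr i0).1
  have hR1 : R < 1 := by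
    obtain ⟨i0, -, hi0⟩ := Finset.exists_mem_eq_sup' Finset.univ_nonempty r
    rw [hRdef, hi0]; exact (hr i0).2
  have hR0 : 0 < R := hρ0.trans_le ((hbd ⟨0, hN⟩).1.trans (hbd ⟨0, hN⟩).2)
  have hρ1 : ρ < 1 := lt_of_le_of_lt ((hbd ⟨0, hN⟩).1.trans (hbd ⟨0, hN⟩).2) hR1
  have hM1 : 1 ≤ coverN FC 1 := coverAux.coverN_pos hFCne one_pos
  have hM1' : (1:ℝ) ≤ (coverN FC 1 : ℝ) := by exact_mod_cast hM1
  have hIoo : Set.Ioo (0:ℝ) 1 ∈ 𝓝[>] (0:ℝ) := Ioo_mem_nhdsGT_of_mem ⟨le_refl 0, one_pos⟩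
  have hcmp : ∀ᶠ δ in 𝓝[>] (0:ℝ), 0 ≤ fC δ ∧ fC δ ≤ fF δ ∧ 0 ≤ fF δ := by
    filter_upwards [hIoo] with δ hδ
    have hδ0 : 0 < δ := hδ.1
    have hlg : 0 < -Real.log δ := by have := Real.log_neg hδ0 hδ.2; linarith
    have h1 : (1:ℝ) ≤ (coverN C δ : ℝ) := by
      exact_mod_cast coverAux.coverN_pos hCne hδ0
    have h2 : (coverN C δ : ℝ) ≤ (coverN FC δ : ℝ) := by
      exact_mod_cast coverAux.coverN_mono hCFC hδ0
    have hl1 : 0 ≤ Real.log (coverN C δ) := Real.log_nonneg h1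
    have hl2 : Real.log (coverN C δ) ≤ Real.log (coverN FC δ) :=
      Real.log_le_log (by linarith) h2
    exact ⟨div_nonneg hl1 hlg.le, (div_le_div_iff_of_pos_right hlg).2 hl2,
      div_nonneg (hl1.trans hl2) hlg.le⟩
  have hbelowC : Filter.IsBoundedUnder (· ≥ ·) (𝓝[>] (0:ℝ)) fC :=
    ⟨0, Filter.eventually_map.2 (hcmp.mono fun δ h => h.1)⟩
  have hbelowF : Filter.IsBoundedUnder (· ≥ ·) (𝓝[>] (0:ℝ)) fF :=
    ⟨0, Filter.eventually_map.2 (hcmp.mono fun δ h => h.2.2)⟩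
  by_cases hB : Filter.IsBoundedUnder (· ≤ ·) (𝓝[>] (0:ℝ)) fC
  · -- Case A : fC eventually bounded above
    set d := ubDim C with hd
    have hd0 : 0 ≤ d := hs0.trans hsC
    have hupper : ∀ u : ℝ, d < u → ∀ᶠ δ in 𝓝[>] (0:ℝ), fF δ ≤ u := by
      intro u hu
      set t := (d + u) / 2 with ht
      have htd : d < t := by rw [ht]; linarith
      have htu : t < u := by rw [ht]; linarith
      have hts : s ≤ t := hsC.trans htd.le
      have ht0 : 0 ≤ t := hs0.trans hts
      have hevC : ∀ᶠ δ in 𝓝[>] (0:ℝ), fC δ < t :=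
        Filter.eventually_lt_of_limsup_lt (by rw [← hubCdef]; exact htd) hB
      obtain ⟨δ1, hδ1pos, hδ1sub⟩ := mem_nhdsGT_iff_exists_Ioo_subset.1 hevC
      set δ1' := min δ1 1 with hδ1'def
      have hδ1'pos : 0 < δ1' := lt_min hδ1pos one_pos
      have hptC : ∀ ε : ℝ, 0 < ε → ε < δ1' → (coverN C ε : ℝ) ≤ ε ^ (-t) := by
        intro ε hε0 hεlt
        have hε1 : ε < 1 := hεlt.trans_le (min_le_right _ _)
        have hflt : fC ε < t := hδ1sub ⟨hε0, hεlt.trans_le (min_le_left _ _)⟩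
        have hlg : 0 < -Real.log ε := by have := Real.log_neg hε0 hε1; linarith
        have hcov1 : (1:ℝ) ≤ (coverN C ε : ℝ) := by
          exact_mod_cast coverAux.coverN_pos hCne hε0
        have hlt : Real.log (coverN C ε) < t * (-Real.log ε) := by
          have := (div_lt_iff₀ hlg).1 hflt
          linarith
        calc (coverN C ε : ℝ) = Real.exp (Real.log (coverN C ε)) :=
              (Real.exp_log (by linarith)).symm
        _ ≤ Real.exp (t * (-Real.log ε)) := Real.exp_le_exp.2 hlt.le
        _ = ε ^ (-t) := by rw [Real.rpow_def_of_pos hε0]; congr 1; ring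
      set ε0 := δ1' / 2 with hε0def
      have hε00 : 0 < ε0 := by rw [hε0def]; linarith
      set c := max 1 ((coverN C ε0 : ℕ) : ℝ) with hcdef
      have hc1 : (1:ℝ) ≤ c := le_max_left _ _
      have hcval : ∀ ε : ℝ, 0 < ε → ε ≤ 1 → (coverN C ε : ℝ) ≤ c * ε ^ (-t) := by
        intro ε hε0 hε1
        have hεt0 : 0 ≤ ε ^ (-t) := Real.rpow_nonneg hε0.le _
        rcases lt_or_ge ε δ1' with h | h
        · exact (hptC ε hε0 h).trans (le_mul_of_one_le_left hεt0 hc1)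
        · have h1 : coverN C ε ≤ coverN C ε0 :=
            coverAux.coverN_anti C hε00 (by rw [hε0def]; linarith)
          have h2 : ((coverN C ε0 : ℕ) : ℝ) ≤ c := le_max_right _ _
          have h3 : (1:ℝ) ≤ ε ^ (-t) := by
            calc (1:ℝ) = ε ^ (0:ℝ) := (Real.rpow_zero ε).symm
            _ ≤ ε ^ (-t) := Real.rpow_le_rpow_of_exponent_ge hε0 hε1 (by linarith)
          calc (coverN C ε : ℝ) ≤ ((coverN C ε0 : ℕ) : ℝ) := by exact_mod_cast h1
          _ ≤ c := h2
          _ ≤ c * ε ^ (-t) := le_mul_of_one_le_right (by linarith) h3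
      set M := ((coverN FC 1 : ℕ) : ℝ) with hMdef
      have hρs : (1:ℝ) ≤ ρ ^ (-s) := by
        calc (1:ℝ) = ρ ^ (0:ℝ) := (Real.rpow_zero ρ).symm
        _ ≤ ρ ^ (-s) := Real.rpow_le_rpow_of_exponent_ge hρ0 hρ1.le (by linarith)
      set c9 := M * ρ ^ (-s) + c with hc9def
      have hc91 : 1 ≤ c9 := by
        have h1 : (1:ℝ) * 1 ≤ M * ρ ^ (-s) :=
          mul_le_mul hM1' hρs zero_le_one (by linarith)
        rw [hc9def]; linarith
      have hE := coverAux.ev_main hR0 hR1 hc91 (show (0:ℝ) < u - t by linarith)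
      filter_upwards [hIoo, hE] with δ hδm hEδ
      have hδ0 : 0 < δ := hδm.1
      have hδlt1 : δ < 1 := hδm.2
      have hlgδ : 0 < -Real.log δ := by have := Real.log_neg hδ0 hδlt1; linarith
      obtain ⟨K, hK, hbound⟩ := coverAux.main0 S r hr hS hs hs0 C FC hFC hρ0 hR0 hR1 hbd
        hδ0 hδlt1 (by linarith : (0:ℝ) ≤ c) hts
        (fun ε hε1 hε2 => hcval ε (hδ0.trans_le hε1) hε2)
      set L := Real.log δ / Real.log R with hLdef
      have hL0 : 0 ≤ L := by
        rw [hLdef, div_nonneg_iff]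
        exact Or.inr ⟨(Real.log_neg hδ0 hδlt1).le, (Real.log_neg hR0 hR1).le⟩
      have hK3 : (K : ℝ) + 1 ≤ L + 3 := by linarith
      have hδst : δ ^ (-s) ≤ δ ^ (-t) :=
        Real.rpow_le_rpow_of_exponent_ge hδ0 hδlt1.le (by linarith)
      have hρδ : (ρ * δ) ^ (-s) = ρ ^ (-s) * δ ^ (-s) := Real.mul_rpow hρ0.le hδ0.le
      have hδt0 : 0 ≤ δ ^ (-t) := Real.rpow_nonneg hδ0.le _
      have hδs0 : 0 ≤ δ ^ (-s) := Real.rpow_nonneg hδ0.le _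
      have hρs0 : 0 ≤ ρ ^ (-s) := Real.rpow_nonneg hρ0.le _
      have hb2 : (coverN FC δ : ℝ) ≤ c9 * (L + 3) * δ ^ (-t) := by
        have e0 : ((K:ℝ) + 1) * δ ^ (-s) ≤ (L + 3) * δ ^ (-t) :=
          mul_le_mul hK3 hδst hδs0 (by linarith)
        have e1 : M * ((K:ℝ) + 1) * ((ρ * δ) ^ (-s))
            ≤ (M * ρ ^ (-s)) * ((L + 3) * δ ^ (-t)) := by
          rw [hρδ]
          have hMρ : 0 ≤ M * ρ ^ (-s) := by positivity
          calc M * ((K:ℝ) + 1) * (ρ ^ (-s) * δ ^ (-s))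
              = (M * ρ ^ (-s)) * (((K:ℝ) + 1) * δ ^ (-s)) := by ring
          _ ≤ (M * ρ ^ (-s)) * ((L + 3) * δ ^ (-t)) :=
              mul_le_mul_of_nonneg_left e0 hMρ
        have e2 : c * (K : ℝ) * δ ^ (-t) ≤ c * ((L + 3) * δ ^ (-t)) := by
          have : c * (K:ℝ) ≤ c * (L + 3) :=
            mul_le_mul_of_nonneg_left (by linarith) (by linarith)
          calc c * (K : ℝ) * δ ^ (-t) ≤ c * (L + 3) * δ ^ (-t) :=
                mul_le_mul_of_nonneg_right this hδt0
          _ = c * ((L + 3) * δ ^ (-t)) := by ring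
        calc (coverN FC δ : ℝ)
            ≤ M * ((K:ℝ) + 1) * ((ρ * δ) ^ (-s)) + c * K * δ ^ (-t) := hbound
        _ ≤ (M * ρ ^ (-s)) * ((L + 3) * δ ^ (-t)) + c * ((L + 3) * δ ^ (-t)) :=
            add_le_add e1 e2
        _ = c9 * (L + 3) * δ ^ (-t) := by rw [hc9def]; ring
      have hcovpos : (1:ℝ) ≤ (coverN FC δ : ℝ) := by
        exact_mod_cast coverAux.coverN_pos hFCne hδ0
      have hZpos : (0:ℝ) < c9 * (L + 3) :=
        mul_pos (lt_of_lt_of_le one_pos hc91) (by linarith)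
      have hδtpos : (0:ℝ) < δ ^ (-t) := Real.rpow_pos_of_pos hδ0 _
      have hlog : Real.log (coverN FC δ) ≤ Real.log (c9 * (L + 3)) + t * (-Real.log δ) := by
        calc Real.log (coverN FC δ) ≤ Real.log (c9 * (L + 3) * δ ^ (-t)) :=
              Real.log_le_log (by linarith) hb2
        _ = Real.log (c9 * (L + 3)) + Real.log (δ ^ (-t)) :=
            Real.log_mul hZpos.ne' hδtpos.ne'
        _ = Real.log (c9 * (L + 3)) + t * (-Real.log δ) := by
            rw [Real.log_rpow hδ0]; ring
      have hfinal : fF δ ≤ u := by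
        rw [hfF]
        show Real.log (coverN FC δ) / (-Real.log δ) ≤ u
        rw [div_le_iff₀ hlgδ]
        have hEδ' : Real.log (c9 * (L + 3)) ≤ (u - t) * (-Real.log δ) := hEδ
        calc Real.log (coverN FC δ)
            ≤ (u - t) * (-Real.log δ) + t * (-Real.log δ) := by linarith
        _ = u * (-Real.log δ) := by ring
      exact hfinal
    have hBF : Filter.IsBoundedUnder (· ≤ ·) (𝓝[>] (0:ℝ)) fF :=
      ⟨d + 1, Filter.eventually_map.2 (hupper (d+1) (by linarith))⟩
    have h1 : ubDim FC ≤ d := by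
      rw [hubFdef]
      refine le_of_forall_pos_le_add fun ε hε => ?_
      exact Filter.limsup_le_of_le (by exact hbelowF.isCoboundedUnder_flip)
        (hupper (d + ε) (by linarith))
    have h2 : lbDim C ≤ lbDim FC := by
      rw [hlbCdef, hlbFdef]
      exact Filter.liminf_le_liminf (hcmp.mono fun δ h => h.2.1)
        hbelowC (by exact hBF.isCoboundedUnder_flip)
    have h3 : lbDim FC ≤ ubDim FC := by
      rw [hlbFdef, hubFdef]
      exact Filter.liminf_le_limsup hBF hbelowF
    have h4 : lbDim C = d := hdimC
    have h5 : d ≤ lbDim FC := h4 ▸ h2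
    exact ⟨le_antisymm h3 (h1.trans h5), le_antisymm h1 (h5.trans h3)⟩
  · -- Case B : fC not eventually bounded above
    have hnB : ¬ Filter.IsBoundedUnder (· ≤ ·) (𝓝[>] (0:ℝ)) fF := by
      rintro ⟨b, hb⟩
      refine hB ⟨b, Filter.eventually_map.2 ?_⟩
      have hb' := Filter.eventually_map.1 hb
      filter_upwards [hb', hcmp] with δ h1 h2
      exact h2.2.1.trans h1
    have hubF0 : ubDim FC = 0 := by
      rw [hubFdef, Filter.limsup_eq]
      have hempty : {a : ℝ | ∀ᶠ δ in 𝓝[>] (0:ℝ), fF δ ≤ a} = ∅ := by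
        ext a
        simp only [Set.mem_setOf_eq, Set.mem_empty_iff_false, iff_false]
        intro ha
        exact hnB ⟨a, Filter.eventually_map.2 ha⟩
      rw [hempty, Real.sInf_empty]
    have hubC0 : ubDim C = 0 := by
      rw [hubCdef, Filter.limsup_eq]
      have hempty : {a : ℝ | ∀ᶠ δ in 𝓝[>] (0:ℝ), fC δ ≤ a} = ∅ := by
        ext a
        simp only [Set.mem_setOf_eq, Set.mem_empty_iff_false, iff_false]
        intro ha
        exact hB ⟨a, Filter.eventually_map.2 ha⟩
      rw [hempty, Real.sInf_empty]
    have hs00 : s = 0 := le_antisymm (hsC.trans hubC0.le) hs0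
    refine ⟨?_, by rw [hubF0, hubC0]⟩
    rw [hubF0]
    have hlbeq : lbDim FC = sSup {a : ℝ | ∀ᶠ δ in 𝓝[>] (0:ℝ), a ≤ fF δ} := by
      rw [hlbFdef, Filter.liminf_eq]
    by_cases hbdd : BddAbove {a : ℝ | ∀ᶠ δ in 𝓝[>] (0:ℝ), a ≤ fF δ}
    swap
    · rw [hlbeq, Real.sSup_of_not_bddAbove hbdd]
    · have hcobF : Filter.IsCoboundedUnder (· ≥ ·) (𝓝[>] (0:ℝ)) fF := by
        obtain ⟨b, hb⟩ := hbdd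
        exact ⟨b, fun a ha => hb (Filter.eventually_map.1 ha)⟩
      have hcobC : Filter.IsCoboundedUnder (· ≥ ·) (𝓝[>] (0:ℝ)) fC := by
        obtain ⟨b, hb⟩ := hbdd
        refine ⟨b, fun a ha => hb ?_⟩
        have ha' := Filter.eventually_map.1 ha
        exact ((ha'.and hcmp).mono fun δ h => h.1.trans h.2.2.1)
      have hge : (0:ℝ) ≤ Filter.liminf fF (𝓝[>] (0:ℝ)) :=
        Filter.le_liminf_of_le hcobF (hcmp.mono fun δ h => h.2.2)
      have hliminfC : Filter.liminf fC (𝓝[>] (0:ℝ)) = 0 := by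
        rw [← hlbCdef, hdimC, hubC0]
      have hle : Filter.liminf fF (𝓝[>] (0:ℝ)) ≤ 0 := by
        refine le_of_forall_pos_le_add fun ε hε => ?_
        rw [zero_add]
        have hfreqC : ∃ᶠ δ in 𝓝[>] (0:ℝ), fC δ < ε / 2 :=
          Filter.frequently_lt_of_liminf_lt hcobC (by rw [hliminfC]; linarith)
        set M := ((coverN FC 1 : ℕ) : ℝ) with hMdef
        have h2M : (1:ℝ) ≤ 2 * M := by linarith
        have hE := coverAux.ev_main hR0 hR1 h2M (show (0:ℝ) < ε / 2 by linarith)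
        have hfreq2 : ∃ᶠ δ in 𝓝[>] (0:ℝ), fF δ ≤ ε := by
          refine ((hfreqC.and_eventually (hE.and hIoo)).mono ?_)
          rintro δ ⟨h1, hEδ, hδm⟩
          have hδ0 : 0 < δ := hδm.1
          have hδlt1 : δ < 1 := hδm.2
          have hlgδ : 0 < -Real.log δ := by have := Real.log_neg hδ0 hδlt1; linarith
          set cov := ((coverN C δ : ℕ) : ℝ) with hcovdef
          have hcov1 : (1:ℝ) ≤ cov := by
            rw [hcovdef]
            exact_mod_cast coverAux.coverN_pos hCne hδ0
          obtain ⟨K, hK, hbound⟩ := coverAux.main0 S r hr hS hs hs0 C FC hFC hρ0 hR0 hR1 hbd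
            hδ0 hδlt1 (by linarith : (0:ℝ) ≤ cov) (hs00.le : s ≤ 0)
            (fun e he1 he2 => by
              have h1 : coverN C e ≤ coverN C δ := coverAux.coverN_anti C hδ0 he1
              rw [neg_zero, Real.rpow_zero, mul_one, hcovdef]
              exact_mod_cast h1)
          simp only [hs00, neg_zero, Real.rpow_zero, mul_one] at hbound
          rw [← hMdef] at hbound
          set L := Real.log δ / Real.log R with hLdef
          have hL0 : 0 ≤ L := by
            rw [hLdef, div_nonneg_iff]
            exact Or.inr ⟨(Real.log_neg hδ0 hδlt1).le, (Real.log_neg hR0 hR1).le⟩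
          have hK3 : (K : ℝ) + 1 ≤ L + 3 := by linarith
          have hb2 : (coverN FC δ : ℝ) ≤ (2 * M) * (L + 3) * cov := by
            have hKnn : (0:ℝ) ≤ (K:ℝ) := Nat.cast_nonneg K
            have hML : (0:ℝ) ≤ M := by linarith
            have hL3 : (0:ℝ) ≤ L + 3 := by linarith
            have hcovnn : (0:ℝ) ≤ cov := by linarith
            have e1 : M * ((K:ℝ)+1) ≤ M * (L+3) * cov := by
              have q1 : (K:ℝ)+1 ≤ (L+3)*cov := by
                have w1 : (0:ℝ) ≤ (L+3)*(cov-1) :=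
                  mul_nonneg hL3 (by linarith)
                have w2 : (L+3)*cov = (L+3)*(cov-1) + (L+3) := by ring
                linarith
              have q2 := mul_le_mul_of_nonneg_left q1 hML
              rw [← mul_assoc] at q2
              exact q2
            have e2 : cov * (K:ℝ) ≤ M * (L+3) * cov := by
              have q3 : cov * (K:ℝ) ≤ cov * (L+3) :=
                mul_le_mul_of_nonneg_left (by linarith) hcovnn
              have q4 : cov * (L+3) ≤ M * (cov * (L+3)) :=
                le_mul_of_one_le_left (mul_nonneg hcovnn hL3) hM1'
              have q5 : M * (cov * (L+3)) = M * (L+3) * cov := by ring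
              linarith
            calc (coverN FC δ : ℝ) ≤ M * ((K:ℝ)+1) + cov * (K:ℝ) := hbound
            _ ≤ M * (L+3) * cov + M * (L+3) * cov := add_le_add e1 e2
            _ = (2 * M) * (L + 3) * cov := by ring
          have hZpos : (0:ℝ) < (2 * M) * (L + 3) :=
            mul_pos (by linarith) (by linarith)
          have hcovFC1 : (1:ℝ) ≤ (coverN FC δ : ℝ) := by
            exact_mod_cast coverAux.coverN_pos hFCne hδ0
          have hlog : Real.log (coverN FC δ)
              ≤ Real.log ((2 * M) * (L + 3)) + Real.log cov := by
            calc Real.log (coverN FC δ) ≤ Real.log ((2*M) * (L+3) * cov) :=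
                  Real.log_le_log (by linarith) hb2
            _ = Real.log ((2*M) * (L+3)) + Real.log cov :=
                Real.log_mul hZpos.ne' (by linarith)
          have hfCδ : Real.log cov < (ε/2) * (-Real.log δ) := by
            have := (div_lt_iff₀ hlgδ).1 h1
            linarith
          have hEδ' : Real.log ((2*M) * (L + 3)) ≤ (ε/2) * (-Real.log δ) := hEδ
          show Real.log (coverN FC δ) / (-Real.log δ) ≤ ε
          rw [div_le_iff₀ hlgδ]
          calc Real.log (coverN FC δ)
              ≤ (ε/2) * (-Real.log δ) + (ε/2) * (-Real.log δ) := by linarith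
          _ = ε * (-Real.log δ) := by ring
        exact Filter.liminf_le_of_frequently_le hfreq2 hbelowF
      rw [hlbFdef]
      exact le_antisymm hle hge
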